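/- Let C be a finite set (e.g. C = {0,1}ⁿ), let G : C → Sym(m,ℝ) be a map into symmetric m×m matrices all of whose eigenvalues lie in [-1,1], and let X = {x ∈ C : G(x) ⪰ 0} be nonempty with C \ X nonempty. Set λ = max_{x ∈ C\X} λ_min(G(x)), where λ_min denotes the smallest eigenvalue; then λ ∈ [-1, 0). Suppose h is a continuous function on [-1,1] with 0 < h(t) ≤ 1 on [0,1], h(t) > 0 on [-1,1], and h(t) ≥ -m/λ - 1/2 on [-1, λ]. Then X = {x ∈ C : Σ_{j=1}^m λⱼ(G(x))·h(λⱼ(G(x))) ≥ 0}. -/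

import Mathlib

/-- Over a finite set `C`, with `G : C → Sym(m,ℝ)` having all eigenvalues in `[-1,1]`,
`X = {x ∈ C : G(x) ⪰ 0}` nonempty with nonempty complement, and
`λ = max_{x ∈ C\X} λ_min(G(x))`, one has `λ ∈ [-1,0)`; and for any continuous `h` on
`[-1,1]` with `0 < h ≤ 1` on `[0,1]`, `h > 0` on `[-1,1]`, `h ≥ -m/λ - 1/2` on `[-1,λ]`:
`X = {x ∈ C : ∑ⱼ λⱼ(G(x))·h(λⱼ(G(x))) ≥ 0}`. -/
theorem simple_representation_discrete
    (C : Type*) [Fintype C] (m : ℕ) (hm : 0 < m)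
    (G : C → Matrix (Fin m) (Fin m) ℝ) (hG : ∀ x, (G x).IsHermitian)
    (heig : ∀ x j, (hG x).eigenvalues j ∈ Set.Icc (-1 : ℝ) 1)
    (hXne : ∃ x, (G x).PosSemidef) (hXcne : ∃ x, ¬ (G x).PosSemidef)
    (lam : ℝ)
    (hlam_ub : ∀ x, ¬ (G x).PosSemidef → (⨅ j, (hG x).eigenvalues j) ≤ lam)
    (hlam_mem : ∃ x, ¬ (G x).PosSemidef ∧ (⨅ j, (hG x).eigenvalues j) = lam)
    (h : ℝ → ℝ) (hcont : ContinuousOn h (Set.Icc (-1) 1))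
    (h1 : ∀ t ∈ Set.Icc (0 : ℝ) 1, 0 < h t ∧ h t ≤ 1)
    (h2 : ∀ t ∈ Set.Icc (-1 : ℝ) 1, 0 < h t)
    (h3 : ∀ t ∈ Set.Icc (-1 : ℝ) lam, -(m : ℝ) / lam - 1 / 2 ≤ h t) :
    lam ∈ Set.Ico (-1 : ℝ) 0 ∧
      {x : C | (G x).PosSemidef} =
        {x : C | 0 ≤ ∑ j, (hG x).eigenvalues j * h ((hG x).eigenvalues j)} := by
  haveI : Nonempty (Fin m) := ⟨⟨0, hm⟩⟩
  -- not PSD iff some eigenvalue negative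
  have hneg : ∀ x, ¬ (G x).PosSemidef → ∃ j, (hG x).eigenvalues j < 0 := by
    intro x hx
    by_contra hc
    push_neg at hc
    exact hx ((hG x).posSemidef_iff_eigenvalues_nonneg.mpr hc)
  have hbdd : ∀ x, BddBelow (Set.range fun j => (hG x).eigenvalues j) := fun x =>
    (Set.finite_range _).bddBelow
  -- lam < 0
  obtain ⟨x0, hx0, hx0eq⟩ := hlam_mem
  have hlam_neg : lam < 0 := by
    obtain ⟨j, hj⟩ := hneg x0 hx0
    calc lam = ⨅ j, (hG x0).eigenvalues j := hx0eq.symm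
    _ ≤ (hG x0).eigenvalues j := ciInf_le (hbdd x0) j
    _ < 0 := hj
  have hlam_ge : (-1 : ℝ) ≤ lam := by
    rw [← hx0eq]
    exact le_ciInf fun j => (heig x0 j).1
  refine ⟨⟨hlam_ge, hlam_neg⟩, ?_⟩
  ext x
  simp only [Set.mem_setOf_eq]
  constructor
  · intro hx
    refine Finset.sum_nonneg fun j _ => ?_
    have h0 : 0 ≤ (hG x).eigenvalues j := hx.eigenvalues_nonneg j
    exact mul_nonneg h0 (le_of_lt (h1 _ ⟨h0, (heig x j).2⟩).1)
  · intro hsum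
    by_contra hx
    -- minimal eigenvalue
    obtain ⟨j0, hj0⟩ := exists_eq_ciInf_of_finite (f := fun j => (hG x).eigenvalues j)
    set μ := (hG x).eigenvalues j0 with hμ
    have hμle : μ ≤ lam := hj0 ▸ (hj0.symm ▸ hlam_ub x hx)
    have hμge : (-1 : ℝ) ≤ μ := (heig x j0).1
    have hμneg : μ < 0 := lt_of_le_of_lt hμle hlam_neg
    -- bound term j0
    have hterm0 : μ * h μ ≤ -(m : ℝ) + 1 / 2 := by
      have hh := h3 μ ⟨hμge, hμle⟩
      have step1 : μ * h μ ≤ μ * (-(m : ℝ) / lam - 1 / 2) :=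
        mul_le_mul_of_nonpos_left hh (le_of_lt hμneg)
      have hratio : 1 ≤ μ / lam := by
        rw [le_div_iff_of_neg hlam_neg, one_mul]
        exact hμle
      have step2 : μ * (-(m : ℝ) / lam) ≤ -(m : ℝ) := by
        have : μ * (-(m : ℝ) / lam) = -(m : ℝ) * (μ / lam) := by ring
        rw [this]
        nlinarith [Nat.cast_pos (α := ℝ) (n := m) |>.mpr hm]
      nlinarith
    -- bound other terms
    have hterm : ∀ j, (hG x).eigenvalues j * h ((hG x).eigenvalues j) ≤ 1 := by
      intro j
      rcases le_or_gt 0 ((hG x).eigenvalues j) with hj | hj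
      · have := h1 _ ⟨hj, (heig x j).2⟩
        nlinarith [(heig x j).2]
      · have := h2 _ (heig x j)
        nlinarith
    have hcard : ((Finset.univ.erase j0).card : ℝ) = (m : ℝ) - 1 := by
      rw [Finset.card_erase_of_mem (Finset.mem_univ _)]
      simp [Nat.cast_sub hm]
    have hsplit : ∑ j, (hG x).eigenvalues j * h ((hG x).eigenvalues j)
        = μ * h μ + ∑ j ∈ Finset.univ.erase j0,
            (hG x).eigenvalues j * h ((hG x).eigenvalues j) :=
      (Finset.add_sum_erase _ _ (Finset.mem_univ j0)).symm
    have hrest : ∑ j ∈ Finset.univ.erase j0,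
        (hG x).eigenvalues j * h ((hG x).eigenvalues j) ≤ (m : ℝ) - 1 := by
      calc _ ≤ ∑ _j ∈ Finset.univ.erase j0, (1 : ℝ) :=
            Finset.sum_le_sum fun j _ => hterm j
        _ = (m : ℝ) - 1 := by rw [Finset.sum_const, nsmul_eq_mul, mul_one, hcard]
    rw [hsplit] at hsum
    linarith
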